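/- (Necessity direction of Theorem 1.) Let r ≥ 1, m ≥ 0 and q be integers with 2 ≤ q ≤ 2m+2 and q−1 ≤ r, and let σ_0,…,σ_{r−1} be real numbers. Suppose that for every function U : [0,1] → ℝ of class C^{2m+2} there exists a constant C such that |I_n(U) − ∫_0^1 U(x) dx| ≤ C n^{−q} for every integer n ≥ 2r. Then j Σ_{v=0}^{r−1} σ_v (r−v)^{j−1} = r^j − (−1)^j β_j for every j = 1,…,q−1. -/

import Mathlib

open Finset Filter

/-- Faulhaber's formula over `ℝ`. -/
private lemma faulhaber_real (N p : ℕ) :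
    ∑ v ∈ Finset.range N, (v : ℝ) ^ p =
      ∑ i ∈ Finset.range (p + 1),
        (bernoulli i : ℝ) * ((p + 1).choose i) * (N : ℝ) ^ (p + 1 - i) / (p + 1) := by
  have h := _root_.sum_range_pow N p
  exact_mod_cast congrArg (fun q : ℚ => (q : ℝ)) h

/-- The Faulhaber polynomial. -/
private noncomputable def Fpoly (p : ℕ) : Polynomial ℝ :=
  ∑ i ∈ Finset.range (p + 1),
    Polynomial.C ((bernoulli i : ℝ) * ((p + 1).choose i) / ((p : ℝ) + 1)) *
      Polynomial.X ^ (p + 1 - i)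

private lemma Fpoly_eval (p N : ℕ) :
    (Fpoly p).eval (N : ℝ) = ∑ v ∈ Finset.range N, (v : ℝ) ^ p := by
  rw [faulhaber_real, Fpoly, Polynomial.eval_finset_sum]
  refine Finset.sum_congr rfl fun i _ => ?_
  have : ((p : ℝ) + 1) ≠ 0 := by positivity
  simp only [Polynomial.eval_mul, Polynomial.eval_C, Polynomial.eval_pow, Polynomial.eval_X]
  push_cast
  ring

/-- The error polynomial for the monomial `x ^ p`. -/
private noncomputable def gpoly (r p : ℕ) (σ : ℕ → ℝ) : Polynomial ℝ :=
  Polynomial.C (∑ v ∈ Finset.range r, σ v * (v : ℝ) ^ p)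
    + (Fpoly p).comp (Polynomial.X + Polynomial.C (1 - (r : ℝ)))
    - Polynomial.C ((Fpoly p).eval (r : ℝ))
    + (∑ v ∈ Finset.range r, Polynomial.C (σ v) * (Polynomial.X - Polynomial.C (v : ℝ)) ^ p)
    - Polynomial.C (((p : ℝ) + 1)⁻¹) * Polynomial.X ^ (p + 1)

private lemma gpoly_eval (r p : ℕ) (σ : ℕ → ℝ) {n : ℕ} (hr : 1 ≤ r) (hn : 2 * r ≤ n) :
    (gpoly r p σ).eval (n : ℝ) =
      (n : ℝ) ^ (p + 1) * ((1 / (n : ℝ)) *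
        ((∑ v ∈ Finset.range r, σ v * ((v : ℝ) / (n : ℝ)) ^ p)
          + (∑ v ∈ Finset.Icc r (n - r), ((v : ℝ) / (n : ℝ)) ^ p)
          + ∑ v ∈ Finset.range r, σ v * (((n - v : ℕ) : ℝ) / (n : ℝ)) ^ p)
        - 1 / ((p : ℝ) + 1)) := by
  have hrn : r ≤ n := le_trans (by omega) hn
  have hn1 : 1 ≤ n := le_trans hr hrn
  have hn0 : (0 : ℝ) < (n : ℝ) := by exact_mod_cast hn1
  have hp0 : ((p : ℝ) + 1) ≠ 0 := by positivity
  -- the middle sum via Faulhaber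
  have hsplit : ∑ v ∈ Finset.range (n - r + 1), (v : ℝ) ^ p
      = ∑ v ∈ Finset.range r, (v : ℝ) ^ p + ∑ v ∈ Finset.Icc r (n - r), (v : ℝ) ^ p := by
    rw [Finset.range_eq_Ico, ← Finset.Ico_add_one_right_eq_Icc,
      ← Finset.sum_Ico_consecutive (fun v : ℕ => (v : ℝ) ^ p) (Nat.zero_le r) (by omega), Finset.range_eq_Ico]
  have hc1 : ((n - r + 1 : ℕ) : ℝ) = (n : ℝ) + (1 - (r : ℝ)) := by
    push_cast [hrn]; ring
  have hmid : ∑ v ∈ Finset.Icc r (n - r), (v : ℝ) ^ p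
      = (Fpoly p).eval ((n : ℝ) + (1 - (r : ℝ))) - (Fpoly p).eval (r : ℝ) := by
    rw [← hc1, Fpoly_eval, Fpoly_eval, hsplit]; ring
  -- rewrite the divided sums
  have e1 : ∑ v ∈ Finset.range r, σ v * ((v : ℝ) / (n : ℝ)) ^ p
      = (∑ v ∈ Finset.range r, σ v * (v : ℝ) ^ p) / (n : ℝ) ^ p := by
    rw [Finset.sum_div]
    exact Finset.sum_congr rfl fun v _ => by rw [div_pow]; ring
  have e2 : ∑ v ∈ Finset.Icc r (n - r), ((v : ℝ) / (n : ℝ)) ^ p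
      = ((Fpoly p).eval ((n : ℝ) + (1 - (r : ℝ))) - (Fpoly p).eval (r : ℝ)) / (n : ℝ) ^ p := by
    rw [← hmid, Finset.sum_div]
    exact Finset.sum_congr rfl fun v _ => by rw [div_pow]
  have e3 : ∑ v ∈ Finset.range r, σ v * (((n - v : ℕ) : ℝ) / (n : ℝ)) ^ p
      = (∑ v ∈ Finset.range r, σ v * ((n : ℝ) - (v : ℝ)) ^ p) / (n : ℝ) ^ p := by
    rw [Finset.sum_div]
    refine Finset.sum_congr rfl fun v hv => ?_
    have hv' : v ≤ n := le_trans (le_of_lt (Finset.mem_range.mp hv)) hrn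
    rw [Nat.cast_sub hv', div_pow]; ring
  rw [e1, e2, e3]
  -- evaluate the polynomial
  have hev : (gpoly r p σ).eval (n : ℝ)
      = (∑ v ∈ Finset.range r, σ v * (v : ℝ) ^ p)
        + (Fpoly p).eval ((n : ℝ) + (1 - (r : ℝ))) - (Fpoly p).eval (r : ℝ)
        + (∑ v ∈ Finset.range r, σ v * ((n : ℝ) - (v : ℝ)) ^ p)
        - ((p : ℝ) + 1)⁻¹ * (n : ℝ) ^ (p + 1) := by
    simp only [gpoly, Polynomial.eval_add, Polynomial.eval_sub, Polynomial.eval_mul,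
      Polynomial.eval_C, Polynomial.eval_pow, Polynomial.eval_X, Polynomial.eval_comp,
      Polynomial.eval_finset_sum]
  rw [hev]
  have hnp : (n : ℝ) ^ p ≠ 0 := by positivity
  field_simp
  ring

private lemma gpoly_derivative_eval (r p : ℕ) (σ : ℕ → ℝ) (hp : 1 ≤ p) :
    (gpoly r p σ).derivative.eval (r : ℝ)
      = ((if p = 1 then (1 : ℝ) else 0) + (bernoulli p : ℝ))
        + (p : ℝ) * (∑ v ∈ Finset.range r, σ v * ((r : ℝ) - (v : ℝ)) ^ (p - 1))
        - (r : ℝ) ^ p := by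
  have hp0 : ((p : ℝ) + 1) ≠ 0 := by positivity
  -- derivative of the Faulhaber polynomial evaluated at 1
  have hF : (Fpoly p).derivative.eval (1 : ℝ)
      = (if p = 1 then (1 : ℝ) else 0) + (bernoulli p : ℝ) := by
    have h1 : (Fpoly p).derivative.eval (1 : ℝ)
        = ∑ i ∈ Finset.range (p + 1), (bernoulli i : ℝ) * (p.choose i : ℝ) := by
      rw [Fpoly, Polynomial.derivative_sum, Polynomial.eval_finset_sum]
      refine Finset.sum_congr rfl fun i hi => ?_
      have hip : i ≤ p := Nat.lt_succ_iff.mp (Finset.mem_range.mp hi)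
      have hch : (p.choose i : ℝ) * ((p : ℝ) + 1) = ((p + 1).choose i : ℝ) * ((p + 1 - i : ℕ) : ℝ) := by
        have := Nat.choose_mul_succ_eq p i
        exact_mod_cast congrArg (fun t : ℕ => (t : ℝ)) this
      simp only [Polynomial.derivative_C_mul, Polynomial.derivative_X_pow, Polynomial.eval_mul,
        Polynomial.eval_C, Polynomial.eval_pow, Polynomial.eval_X, Polynomial.eval_natCast,
        one_pow, mul_one]
      field_simp
      linear_combination (-((bernoulli i : ℚ) : ℝ)) * hch
    rw [h1, Finset.sum_range_succ, Nat.choose_self]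
    have h2 : ∑ i ∈ Finset.range p, (bernoulli i : ℝ) * (p.choose i : ℝ)
        = (if p = 1 then (1 : ℝ) else 0) := by
      have h3 := _root_.sum_bernoulli p
      have h4 := congrArg (fun q : ℚ => (q : ℝ)) h3
      push_cast [apply_ite (fun q : ℚ => (q : ℝ))] at h4
      rw [← h4]
      exact Finset.sum_congr rfl fun i _ => by ring
    rw [h2]
    simp
  -- now compute the whole derivative
  have hder : (gpoly r p σ).derivative
      = (Fpoly p).derivative.comp (Polynomial.X + Polynomial.C (1 - (r : ℝ)))
        + (∑ v ∈ Finset.range r,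
            Polynomial.C (σ v) * ((p : Polynomial ℝ) * (Polynomial.X - Polynomial.C (v : ℝ)) ^ (p - 1)))
        - Polynomial.C (((p : ℝ) + 1)⁻¹) * ((p : Polynomial ℝ) + 1) * Polynomial.X ^ p := by
    simp only [gpoly, Polynomial.derivative_add, Polynomial.derivative_sub,
      Polynomial.derivative_C, Polynomial.derivative_comp,
      Polynomial.derivative_X, Polynomial.derivative_C_mul, Polynomial.derivative_X_pow,
      Polynomial.derivative_sum, Polynomial.derivative_pow, Polynomial.derivative_mul,
      Nat.add_sub_cancel, Polynomial.C_add, Polynomial.C_1, Polynomial.C_eq_natCast,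
      Polynomial.derivative_natCast, zero_mul, mul_one, zero_add, sub_zero, mul_zero, one_mul]
    push_cast
    ring
  rw [hder]
  simp only [Polynomial.eval_add, Polynomial.eval_sub, Polynomial.eval_mul, Polynomial.eval_C,
    Polynomial.eval_pow, Polynomial.eval_X, Polynomial.eval_comp, Polynomial.eval_finset_sum,
    Polynomial.eval_natCast, Polynomial.eval_one]
  have : (r : ℝ) + (1 - (r : ℝ)) = 1 := by ring
  rw [this, hF]
  have hs : ∑ v ∈ Finset.range r, σ v * ((p : ℝ) * ((r : ℝ) - (v : ℝ)) ^ (p - 1))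
      = (p : ℝ) * ∑ v ∈ Finset.range r, σ v * ((r : ℝ) - (v : ℝ)) ^ (p - 1) := by
    rw [Finset.mul_sum]
    exact Finset.sum_congr rfl fun v _ => by ring
  rw [hs]
  field_simp

/-- necessity direction of Theorem 1: if the trapezoid rule with
end corrections `I_n(U)` is a `q`-order accurate approximation of `∫_0^1 U`
for every `U` of class `C^{2m+2}`, then the boundary weights satisfy
`j ∑_{v=0}^{r-1} σ_v (r-v)^{j-1} = r^j − (−1)^j β_j` for `j = 1, …, q−1`. -/
theorem trapezoid_end_corrections_necessary (r m q : ℕ) (hr : 1 ≤ r)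
    (hq2 : 2 ≤ q) (hqm : q ≤ 2 * m + 2) (hqr : q - 1 ≤ r) (σ : ℕ → ℝ)
    (hacc : ∀ U : ℝ → ℝ, ContDiffOn ℝ ((2 * m + 2 : ℕ) : ℕ∞) U (Set.Icc (0 : ℝ) 1) →
      ∃ C : ℝ, ∀ n : ℕ, 2 * r ≤ n →
        |(1 / (n : ℝ)) *
            ((∑ v ∈ Finset.range r, σ v * U ((v : ℝ) / (n : ℝ))) +
             (∑ v ∈ Finset.Icc r (n - r), U ((v : ℝ) / (n : ℝ))) +
             ∑ v ∈ Finset.range r, σ v * U (((n - v : ℕ) : ℝ) / (n : ℝ))) -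
          ∫ x in (0 : ℝ)..1, U x| ≤ C / (n : ℝ) ^ q) :
    ∀ j : ℕ, 1 ≤ j → j ≤ q - 1 →
      (j : ℝ) * ∑ v ∈ Finset.range r, σ v * ((r - v : ℕ) : ℝ) ^ (j - 1) =
        (r : ℝ) ^ j - (-1 : ℝ) ^ j * (bernoulli j : ℝ) := by
  intro j hj1 hj2
  set p := j with hp
  have hpq : p + 1 ≤ q := by omega
  obtain ⟨C, hC⟩ := hacc (fun x => x ^ p) ((contDiff_id.pow p).contDiffOn)
  have hint : (∫ x in (0 : ℝ)..1, x ^ p) = 1 / ((p : ℝ) + 1) := by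
    rw [integral_pow]; push_cast; norm_num
  -- the error bound gives a bound on the error polynomial at natural points
  have hbound : ∀ n : ℕ, 2 * r ≤ n → |(gpoly r p σ).eval (n : ℝ)| ≤ max C 0 := by
    intro n hn
    have hn1 : 1 ≤ n := by omega
    have hn0 : (0 : ℝ) < (n : ℝ) := by exact_mod_cast hn1
    have h := hC n hn
    simp only [hint] at h
    rw [gpoly_eval r p σ hr hn, abs_mul, abs_pow, abs_of_pos hn0]
    have h1 : (n : ℝ) ^ (p + 1) ≤ (n : ℝ) ^ q :=
      pow_le_pow_right₀ (by exact_mod_cast hn1) hpq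
    calc (n : ℝ) ^ (p + 1) * |_| ≤ (n : ℝ) ^ (p + 1) * (C / (n : ℝ) ^ q) := by
          exact mul_le_mul_of_nonneg_left h (by positivity)
      _ ≤ (n : ℝ) ^ q * (C / (n : ℝ) ^ q) := by
          have hCnn : 0 ≤ C / (n : ℝ) ^ q := le_trans (abs_nonneg _) h
          exact mul_le_mul_of_nonneg_right h1 hCnn
      _ = C := by field_simp
      _ ≤ max C 0 := le_max_left _ _
  -- the error polynomial is constant
  have hdeg : (gpoly r p σ).degree ≤ 0 := by
    by_contra hd
    push_neg at hd
    have ht := (Polynomial.abs_tendsto_atTop (gpoly r p σ) hd).comp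
      (tendsto_natCast_atTop_atTop (R := ℝ))
    have hev := (ht.eventually_gt_atTop (max C 0)).and
      (Filter.eventually_ge_atTop (2 * r))
    obtain ⟨n, hgt, hge⟩ := hev.exists
    exact absurd (hbound n hge) (not_le.mpr hgt)
  have hder0 : (gpoly r p σ).derivative = 0 := by
    rw [Polynomial.eq_C_of_degree_le_zero hdeg]; simp
  have h0 : (gpoly r p σ).derivative.eval (r : ℝ) = 0 := by rw [hder0]; simp
  rw [gpoly_derivative_eval r p σ hj1] at h0
  -- rewrite the natural subtraction in the goal
  have hgoal : ∑ v ∈ Finset.range r, σ v * ((r - v : ℕ) : ℝ) ^ (j - 1)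
      = ∑ v ∈ Finset.range r, σ v * ((r : ℝ) - (v : ℝ)) ^ (p - 1) := by
    refine Finset.sum_congr rfl fun v hv => ?_
    have hv' : v ≤ r := le_of_lt (Finset.mem_range.mp hv)
    rw [Nat.cast_sub hv']
  rw [hgoal]
  -- finish by cases on the parity of p
  rcases eq_or_ne p 1 with hp1 | hp1
  · rw [hp1] at h0 ⊢
    simp only [if_pos rfl] at h0
    have hb1 : (bernoulli 1 : ℝ) = -1 / 2 := by
      rw [bernoulli_one]; norm_num
    rw [hb1] at h0 ⊢
    push_cast at h0 ⊢
    linarith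
  · simp only [if_neg hp1] at h0
    rcases Nat.even_or_odd p with hpe | hpo
    · have : (-1 : ℝ) ^ p = 1 := hpe.neg_one_pow
      rw [this]
      linarith
    · have hbp : bernoulli p = 0 := by
        rw [bernoulli_eq_bernoulli'_of_ne_one hp1]
        exact bernoulli'_eq_zero_of_odd hpo (by omega)
      have hbp' : (bernoulli p : ℝ) = 0 := by rw [hbp]; norm_num
      rw [hbp'] at h0
      rw [hpo.neg_one_pow, hbp']
      linarith
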